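/- Let d ≥ n and let λ ∈ Xf be d-deep in a p-restricted p-alcove. Then for every s ∈ Wf and every pair (s′, μ′) ∈ Wf × Xf with μ′ lying in C₀ (i.e. 0 < ⟨μ′_j + η₀, α^∨⟩ < p for all j and positive coroots) and (s′, μ′ + η) ∼ (s, w̃_h · λ + η), the weight μ′ is (d − n + 1)-deep in C₀. In particular the tame inertial type τ(s, w̃_h · λ + η) is at least (d − n + 1)-generic. -/

import Mathlib

/-!
Common setup: the extended affine Weyl group of `GL_n` (f-fold product), its dot
action on `(ℝ^n)^f`, p-alcoves, lengths, Bruhat orders (dominant and antidominant),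
the up (↑) order, admissible sets, and the combinatorics of lowest alcove
presentations, following Le–Le Hung–Levin, "Weight elimination in Serre-type
conjectures".
-/

noncomputable section

namespace LLLSerre

open scoped BigOperators

/-- `η₀ = (n-1, n-2, …, 1, 0)`. -/
def eta0 (n : ℕ) : Fin n → ℤ := fun i => (n : ℤ) - 1 - (i : ℤ)

/-- The action of a permutation on a vector: `(σ x) i = x (σ⁻¹ i)`. -/
def permAct {n : ℕ} {α : Type*} (σ : Equiv.Perm (Fin n)) (x : Fin n → α) : Fin n → α :=
  fun i => x (σ⁻¹ i)

/-- The weight lattice `Xf = (ℤ^n)^f`. -/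
abbrev Xf (n f : ℕ) := Fin f → Fin n → ℤ

/-- The f-fold product of Weyl groups `Wf = (S_n)^f`. -/
abbrev WfG (n f : ℕ) := Fin f → Equiv.Perm (Fin n)

/-- Points of `(ℝ^n)^f`. -/
abbrev RPt (n f : ℕ) := Fin f → Fin n → ℝ

/-- The extended affine Weyl group `Wtf = (X ⋊ W)^f`; the pair `(w, ν)` represents
`w t_ν`. -/
structure Wtf (n f : ℕ) where
  w : WfG n f
  t : Xf n f

/-- Multiplication in `Wtf`: `(w₁ t_{ν₁})(w₂ t_{ν₂}) = w₁w₂ t_{ν₂ + w₂⁻¹(ν₁)}`. -/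
def Wtf.mul {n f : ℕ} (a b : Wtf n f) : Wtf n f :=
  ⟨fun j => a.w j * b.w j, fun j => b.t j + permAct (b.w j)⁻¹ (a.t j)⟩

/-- Inversion in `Wtf`: `(w t_ν)⁻¹ = w⁻¹ t_{-w(ν)}`. -/
def Wtf.inv {n f : ℕ} (a : Wtf n f) : Wtf n f :=
  ⟨fun j => (a.w j)⁻¹, fun j => -(permAct (a.w j) (a.t j))⟩

/-- Embedding of the finite Weyl group `Wf` in `Wtf`. -/
def ofW {n f : ℕ} (w : WfG n f) : Wtf n f := ⟨w, fun _ _ => 0⟩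

/-- The translation `t_ν ∈ Wtf`. -/
def transl {n f : ℕ} (ν : Xf n f) : Wtf n f := ⟨fun _ => 1, ν⟩

/-- `η = (η₀, …, η₀) ∈ Xf`. -/
def etaf (n f : ℕ) : Xf n f := fun _ => eta0 n

/-- The longest element `w₀ ∈ Wf`. -/
def w0f (n f : ℕ) : WfG n f := fun _ => Fin.revPerm

/-- `w₀` as an element of `Wtf`. -/
def w0Elt (n f : ℕ) : Wtf n f := ofW (w0f n f)

/-- `w̃_h = w₀ t_{-η} ∈ Wtf`. -/
def whElt (n f : ℕ) : Wtf n f := ⟨w0f n f, fun _ i => -(eta0 n i)⟩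

/-- The dot action of `Wtf` on `(ℝ^n)^f`: `(w t_ν) · x = w(x + η + pν) − η`. -/
def dotR {n f : ℕ} (p : ℕ) (a : Wtf n f) (x : RPt n f) : RPt n f :=
  fun j i =>
    (x j ((a.w j)⁻¹ i) + ((eta0 n ((a.w j)⁻¹ i) : ℤ) : ℝ)
      + (p : ℝ) * ((a.t j ((a.w j)⁻¹ i) : ℤ) : ℝ)) - ((eta0 n i : ℤ) : ℝ)

/-- The dot action of `Wtf` on integral weights. -/
def dotZ {n f : ℕ} (p : ℕ) (a : Wtf n f) (lam : Xf n f) : Xf n f :=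
  fun j i =>
    (lam j ((a.w j)⁻¹ i) + eta0 n ((a.w j)⁻¹ i) + (p : ℤ) * a.t j ((a.w j)⁻¹ i)) - eta0 n i

/-- `⟨x_j + η₀, α_{ik}^∨⟩` for a real point `x`. -/
def prR {n f : ℕ} (x : RPt n f) (j : Fin f) (i k : Fin n) : ℝ :=
  (x j i + ((eta0 n i : ℤ) : ℝ)) - (x j k + ((eta0 n k : ℤ) : ℝ))

/-- `⟨λ_j + η₀, α_{ik}^∨⟩` for a weight `λ`. -/
def prZ {n f : ℕ} (lam : Xf n f) (j : Fin f) (i k : Fin n) : ℤ :=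
  (lam j i + eta0 n i) - (lam j k + eta0 n k)

/-- A point is (p-)regular if it lies on none of the affine hyperplanes
`⟨x_j + η₀, α^∨⟩ = pm`. -/
def regular {n f : ℕ} (p : ℕ) (x : RPt n f) : Prop :=
  ∀ (j : Fin f) (i k : Fin n) (m : ℤ), i < k → prR x j i k ≠ (p : ℝ) * (m : ℝ)

/-- Two regular points lie in the same p-alcove (same side of every hyperplane). -/
def sameAlcove {n f : ℕ} (p : ℕ) (x y : RPt n f) : Prop :=
  regular p x ∧ regular p y ∧
    ∀ (j : Fin f) (i k : Fin n) (m : ℤ), i < k →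
      (prR x j i k < (p : ℝ) * (m : ℝ) ↔ prR y j i k < (p : ℝ) * (m : ℝ))

/-- The root `α_{ik} = e_i - e_k` as a real vector. -/
def rootR {n : ℕ} (i k i' : Fin n) : ℝ :=
  (if i' = i then (1 : ℝ) else 0) - (if i' = k then (1 : ℝ) else 0)

/-- The affine reflection across the hyperplane `⟨x_j + η₀, α_{ik}^∨⟩ = pm`:
it replaces `x_j` by `x_j − (⟨x_j + η₀, α_{ik}^∨⟩ − pm) α_{ik}`. -/
def reflPt {n f : ℕ} (p : ℕ) (j : Fin f) (i k : Fin n) (m : ℤ) (x : RPt n f) : RPt n f :=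
  fun j' i' =>
    if j' = j then x j' i' - (prR x j i k - (p : ℝ) * (m : ℝ)) * rootR i k i' else x j' i'

/-- The origin, a point of the base alcove `C₀` (when `p > n`). -/
def basePt (n f : ℕ) : RPt n f := fun _ _ => 0

/-- The hyperplane indexed by `(j, i, k, m)` separates `x` from `y`. -/
def separates {n f : ℕ} (p : ℕ) (x y : RPt n f) (j : Fin f) (i k : Fin n) (m : ℤ) : Prop :=
  (prR x j i k < (p : ℝ) * (m : ℝ) ∧ (p : ℝ) * (m : ℝ) < prR y j i k) ∨
  (prR y j i k < (p : ℝ) * (m : ℝ) ∧ (p : ℝ) * (m : ℝ) < prR x j i k)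

/-- The length of `a ∈ Wtf` measured from the alcove of the base point `x`:
the number of hyperplanes separating the alcove of `x` from its image under `a`. -/
def lenFrom {n f : ℕ} (p : ℕ) (x : RPt n f) (a : Wtf n f) : ℕ :=
  Set.ncard {q : Fin f × Fin n × Fin n × ℤ |
    q.2.1 < q.2.2.1 ∧ separates p x (dotR p a x) q.1 q.2.1 q.2.2.1 q.2.2.2}

/-- Length relative to the dominant base alcove `C₀`. -/
def len {n f : ℕ} (p : ℕ) (a : Wtf n f) : ℕ := lenFrom p (basePt n f) a

/-- A point of the antidominant base alcove `w₀ · C₀`. -/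
def antiBasePt (n f p : ℕ) : RPt n f := dotR p (w0Elt n f) (basePt n f)

/-- Length relative to the antidominant base alcove `w₀ · C₀`. -/
def lenV {n f : ℕ} (p : ℕ) (a : Wtf n f) : ℕ := lenFrom p (antiBasePt n f p) a

/-- The affine Weyl group `Waf = (Λ_R ⋊ W)^f ⊆ Wtf`. -/
def Waf (n f : ℕ) : Set (Wtf n f) := {a | ∀ j, (∑ i, a.t j i) = 0}

/-- The stabilizer `Ωf` of the dominant base alcove `C₀`. -/
def Omegaf (n f p : ℕ) : Set (Wtf n f) :=
  {a | sameAlcove p (basePt n f) (dotR p a (basePt n f))}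

/-- The stabilizer of the antidominant base alcove `w₀ · C₀`. -/
def OmegaV (n f p : ℕ) : Set (Wtf n f) :=
  {a | sameAlcove p (antiBasePt n f p) (dotR p a (antiBasePt n f p))}

/-- `a ∈ Wtf` acts via the dot action as the affine reflection in a single hyperplane. -/
def isRefl {n f : ℕ} (p : ℕ) (a : Wtf n f) : Prop :=
  ∃ (j : Fin f) (i k : Fin n) (m : ℤ), i < k ∧ ∀ x, dotR p a x = reflPt p j i k m x

/-- One step of the Bruhat order (relative to the base point `x`):
`u < r u` for `r` a reflection with `ℓ(u) < ℓ(r u)`. -/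
def bruhatStepFrom {n f : ℕ} (p : ℕ) (x : RPt n f) (u v : Wtf n f) : Prop :=
  ∃ r, isRefl p r ∧ v = Wtf.mul r u ∧ lenFrom p x u < lenFrom p x v

/-- The Bruhat order on `Wtf` relative to the base alcove with representative
point `x` and stabilizer `Ω`: on `Waf` it is generated by the reflection steps,
and is extended to `Wtf` by `u ω ≤ v ω` for `u ≤ v` in `Waf`, `ω ∈ Ω`. -/
def bruhatLEFrom {n f : ℕ} (p : ℕ) (x : RPt n f) (Om : Set (Wtf n f)) (a b : Wtf n f) : Prop :=
  ∃ u v ω, u ∈ Waf n f ∧ v ∈ Waf n f ∧ ω ∈ Om ∧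
    a = Wtf.mul u ω ∧ b = Wtf.mul v ω ∧
    Relation.ReflTransGen (bruhatStepFrom p x) u v

/-- The Bruhat order on `Wtf` relative to the dominant base alcove. -/
def bruhatLE {n f : ℕ} (p : ℕ) (a b : Wtf n f) : Prop :=
  bruhatLEFrom p (basePt n f) (Omegaf n f p) a b

/-- The Bruhat order on `Wtf` relative to the antidominant base alcove. -/
def bruhatLEV {n f : ℕ} (p : ℕ) (a b : Wtf n f) : Prop :=
  bruhatLEFrom p (antiBasePt n f p) (OmegaV n f p) a b

/-- The admissible set `Adm(λ) = {w̃ : w̃ ≤ t_{σ(λ)} for some σ ∈ Wf}` (dominant order). -/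
def Adm {n f : ℕ} (p : ℕ) (lam : Xf n f) : Set (Wtf n f) :=
  {a | ∃ σ : WfG n f, bruhatLE p a (transl (fun j => permAct (σ j) (lam j)))}

/-- The admissible set `Adm∨(λ)` (antidominant order). -/
def AdmV {n f : ℕ} (p : ℕ) (lam : Xf n f) : Set (Wtf n f) :=
  {a | ∃ σ : WfG n f, bruhatLEV p a (transl (fun j => permAct (σ j) (lam j)))}

/-- The anti-automorphism `w̃ = w t_ν ↦ w̃* = t_{ν*} w*` of `Wtf`, where
`(w*)_j = (w_{f-1-j})⁻¹` and `(ν*)_j = ν_{f-1-j}`. -/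
def wstar {n f : ℕ} (a : Wtf n f) : Wtf n f :=
  ⟨fun j => (a.w (Fin.rev j))⁻¹, fun j => permAct (a.w (Fin.rev j)) (a.t (Fin.rev j))⟩

/-- `ν ↦ ν*` on weights: `(ν*)_j = ν_{f-1-j}`. -/
def xstar {n f : ℕ} (lam : Xf n f) : Xf n f := fun j => lam (Fin.rev j)

/-- The cyclic shift `π` on weights: `(πν)_j = ν_{j-1}`. -/
def sh {n f : ℕ} (ν : Xf n f) : Xf n f := fun j => ν ((finRotate f)⁻¹ j)

/-- The cyclic shift `π` on `Wf`: `(πσ)_j = σ_{j-1}`. -/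
def shW {n f : ℕ} (σ : WfG n f) : WfG n f := fun j => σ ((finRotate f)⁻¹ j)

/-- The `Wf`-part of `^(ν,σ)(w, μ)`, namely `σ w π(σ)⁻¹`. -/
def conjW {n f : ℕ} (σ w : WfG n f) : WfG n f := fun j => σ j * w j * (shW σ j)⁻¹

/-- The `Xf`-part of `^(ν,σ)(w, μ)`, namely `σ(μ) + pν − σwπ(σ)⁻¹ π(ν)`. -/
def conjX {n f : ℕ} (p : ℕ) (ν : Xf n f) (σ w : WfG n f) (μ : Xf n f) : Xf n f :=
  fun j i => permAct (σ j) (μ j) i + (p : ℤ) * ν j i - permAct (conjW σ w j) (sh ν j) i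

/-- `(w, μ) ∼ (w', μ')`: `(w', μ') = ^(ν,σ)(w, μ)` for some `(ν, σ)`. -/
def pairEquiv {n f : ℕ} (p : ℕ) (w : WfG n f) (μ : Xf n f) (w' : WfG n f) (μ' : Xf n f) : Prop :=
  ∃ (ν : Xf n f) (σ : WfG n f), w' = conjW σ w ∧ μ' = conjX p ν σ w μ

/-- `λ` is m-deep in the base alcove `C₀`:
`m < ⟨λ_j + η₀, α^∨⟩ < p − m` for all `j` and positive coroots `α^∨`. -/
def deep {n f : ℕ} (p m : ℕ) (lam : Xf n f) : Prop :=
  ∀ (j : Fin f) (i k : Fin n), i < k →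
    (m : ℤ) < prZ lam j i k ∧ prZ lam j i k < (p : ℤ) - (m : ℤ)

/-- `λ` lies m-deep in its own p-alcove. -/
def deepInAlcove {n f : ℕ} (p m : ℕ) (lam : Xf n f) : Prop :=
  ∀ (j : Fin f) (i k : Fin n), i < k →
    ∃ N : ℤ, (p : ℤ) * N + (m : ℤ) < prZ lam j i k ∧
      prZ lam j i k < (p : ℤ) * (N + 1) - (m : ℤ)

/-- The p-restricted weights `X₁`. -/
def X1 (n f p : ℕ) : Set (Xf n f) :=
  {lam | ∀ (j : Fin f) (i : Fin n) (h : (i : ℕ) + 1 < n),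
    0 ≤ lam j i - lam j ⟨(i : ℕ) + 1, h⟩ ∧ lam j i - lam j ⟨(i : ℕ) + 1, h⟩ ≤ (p : ℤ) - 1}

/-- `X⁰`: weights pairing to 0 with every coroot. -/
def X0 (n f : ℕ) : Set (Xf n f) := {lam | ∀ (j : Fin f) (i k : Fin n), lam j i = lam j k}

/-- The alcove of the regular point `x` is dominant. -/
def dominantPt {n f : ℕ} (x : RPt n f) : Prop :=
  ∀ (j : Fin f) (i k : Fin n), i < k → 0 < prR x j i k

/-- The alcove of the regular point `x` is p-restricted. -/
def restrictedPt {n f : ℕ} (p : ℕ) (x : RPt n f) : Prop :=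
  ∀ (j : Fin f) (i : Fin n) (h : (i : ℕ) + 1 < n),
    0 < prR x j i ⟨(i : ℕ) + 1, h⟩ ∧ prR x j i ⟨(i : ℕ) + 1, h⟩ < (p : ℝ)

/-- `Wtf⁺`: the elements sending `C₀` to a dominant alcove under the dot action. -/
def WtfPlus (n f p : ℕ) : Set (Wtf n f) := {a | dominantPt (dotR p a (basePt n f))}

/-- One step of the up (↑) order on alcoves, via representative points:
stay in the same alcove, or apply a reflection across a hyperplane lying above. -/
def upStep {n f : ℕ} (p : ℕ) (x y : RPt n f) : Prop :=
  sameAlcove p x y ∨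
    ∃ (j : Fin f) (i k : Fin n) (m : ℤ), i < k ∧ prR x j i k < (p : ℝ) * (m : ℝ) ∧
      y = reflPt p j i k m x

/-- The up (↑) order on p-alcoves, via representative points. -/
def alcoveLE {n f : ℕ} (p : ℕ) (x y : RPt n f) : Prop :=
  Relation.ReflTransGen (upStep p) x y

/-- `w̃₁ ↑ w̃₂` on `Wtf`: `w̃₁ · C₀ ↑ w̃₂ · C₀` and `w̃₁, w̃₂` in the same right
`Waf`-coset. -/
def upOrd {n f : ℕ} (p : ℕ) (a b : Wtf n f) : Prop :=
  alcoveLE p (dotR p a (basePt n f)) (dotR p b (basePt n f)) ∧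
    Wtf.mul a (Wtf.inv b) ∈ Waf n f

/-- Realification of an integral weight. -/
def toR {n f : ℕ} (lam : Xf n f) : RPt n f := fun j i => ((lam j i : ℤ) : ℝ)

/-- The `Wf`-orbit of a point of `(ℝ^n)^f`. -/
def orbitR {n f : ℕ} (y : RPt n f) : Set (RPt n f) :=
  Set.range fun σ : WfG n f => fun j => permAct (σ j) (y j)

end LLLSerre

set_option maxHeartbeats 1600000

namespace LLLSerre

/-- let `λ` be d-deep in a p-restricted p-alcove with `d ≥ n`. Then
for every `s ∈ Wf` and every pair `(s', μ')` with `μ'` in `C₀` and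
`(s', μ' + η) ∼ (s, w̃_h · λ + η)`, the weight `μ'` is (d − n + 1)-deep in `C₀`. -/
theorem statement6 (n f p d : ℕ) (hn : 2 ≤ n) (hf : 1 ≤ f) (hp : p.Prime) (hnp : n < p)
    (hd : n ≤ d) (lam : Xf n f) (hdeep : deepInAlcove p d lam)
    (hres : ∀ (j : Fin f) (i : Fin n) (h : (i : ℕ) + 1 < n),
      0 < prZ lam j i ⟨(i : ℕ) + 1, h⟩ ∧ prZ lam j i ⟨(i : ℕ) + 1, h⟩ < (p : ℤ))
    (s s' : WfG n f) (μ' : Xf n f) (hμ' : deep p 0 μ')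
    (hequiv : pairEquiv p s (dotZ p (whElt n f) lam + etaf n f) s' (μ' + etaf n f)) :
    deep p (d - n + 1) μ' := by
  obtain ⟨ν, σ, hs', hμeq⟩ := hequiv
  have hp0 : (0:ℤ) < (p:ℤ) := by exact_mod_cast hp.pos
  have hdZ : (n:ℤ) ≤ (d:ℤ) := by exact_mod_cast hd
  have hnZ : (2:ℤ) ≤ (n:ℤ) := by exact_mod_cast hn
  -- key identity from the equivalence
  have key : ∀ (j : Fin f) (i : Fin n),
      μ' j i + eta0 n i =
        (lam j (Fin.rev ((σ j)⁻¹ i)) + eta0 n (Fin.rev ((σ j)⁻¹ i))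
          - (p:ℤ) * eta0 n (Fin.rev ((σ j)⁻¹ i)))
        + (p:ℤ) * ν j i - ν ((finRotate f)⁻¹ j) ((conjW σ s j)⁻¹ i) := by
    intro j i
    have h := congrFun (congrFun hμeq j) i
    simp only [Pi.add_apply, conjX, permAct, sh, dotZ, whElt, etaf, w0f,
      Fin.revPerm_symm, Fin.revPerm_apply, Equiv.Perm.inv_def] at h ⊢
    linarith [h]
  -- simple-root depth
  have hsimp : ∀ (j : Fin f) (a b : Fin n), (b:ℕ) = (a:ℕ) + 1 →
      (d:ℤ) < prZ lam j a b ∧ prZ lam j a b < (p:ℤ) - d := by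
    intro j a b hab
    have h1 : (a:ℕ) + 1 < n := hab ▸ b.isLt
    have hr := hres j a h1
    have hb : (⟨(a:ℕ)+1, h1⟩ : Fin n) = b := Fin.ext hab.symm
    rw [hb] at hr
    have hlt : a < b := by rw [Fin.lt_def]; omega
    obtain ⟨N, hN1, hN2⟩ := hdeep j a b hlt
    have hd0 : (0:ℤ) < (d:ℤ) := by linarith
    have hN0 : N = 0 := by
      rcases lt_trichotomy N 0 with h | h | h
      · exfalso
        have hN1' : N + 1 ≤ 0 := by omega
        nlinarith [hr.1, hN2, mul_nonpos_of_nonneg_of_nonpos (le_of_lt hp0) hN1']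
      · exact h
      · exfalso
        have hN1' : 1 ≤ N := by omega
        nlinarith [hr.2, hN1]
    subst hN0
    refine ⟨by linarith, ?_⟩
    have e : (p:ℤ)*((0:ℤ)+1) = (p:ℤ) := by ring
    linarith [hN2, e]
  have h2d : 2*(d:ℤ) < p := by
    have := hsimp ⟨0, hf⟩ ⟨0, by omega⟩ ⟨1, by omega⟩ rfl
    linarith
  -- telescoping bound along chains of simple roots
  have hchain : ∀ (j : Fin f) (t : ℕ) (a b : Fin n), (b:ℕ) = (a:ℕ) + t →
      (t:ℤ)*((d:ℤ)+1) ≤ prZ lam j a b ∧ prZ lam j a b ≤ (t:ℤ)*((p:ℤ)-d-1) := by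
    intro j t
    induction t with
    | zero =>
      intro a b hab
      have : a = b := Fin.ext (by omega)
      subst this
      simp [prZ]
    | succ t ih =>
      intro a b hab
      have hb' : (a:ℕ) + t < n := by have := b.isLt; omega
      have h1 := ih a ⟨(a:ℕ) + t, hb'⟩ rfl
      have h2 := hsimp j ⟨(a:ℕ) + t, hb'⟩ b (by show (b:ℕ) = (a:ℕ) + t + 1; omega)
      have hsplit : prZ lam j a b = prZ lam j a ⟨(a:ℕ) + t, hb'⟩
          + prZ lam j ⟨(a:ℕ) + t, hb'⟩ b := by
        simp only [prZ]; ring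
      have h2a : (d:ℤ) + 1 ≤ prZ lam j ⟨(a:ℕ) + t, hb'⟩ b := Int.add_one_le_iff.mpr h2.1
      have h2b : prZ lam j ⟨(a:ℕ) + t, hb'⟩ b ≤ (p:ℤ) - d - 1 := by
        have := Int.add_one_le_iff.mpr h2.2; linarith
      push_cast
      constructor <;> nlinarith [h1.1, h1.2]
  -- bound on differences of the G-function
  have hGbound : ∀ (j : Fin f) (a b : Fin n),
      |(lam j a + eta0 n a - (p:ℤ) * eta0 n a) - (lam j b + eta0 n b - (p:ℤ) * eta0 n b)|
        ≤ ((n:ℤ)-1)*((p:ℤ)-(d:ℤ)-1) := by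
    have main : ∀ (j : Fin f) (a b : Fin n), (a:ℕ) ≤ (b:ℕ) →
        |(lam j a + eta0 n a - (p:ℤ) * eta0 n a) - (lam j b + eta0 n b - (p:ℤ) * eta0 n b)|
          ≤ ((n:ℤ)-1)*((p:ℤ)-(d:ℤ)-1) := by
      intro j a b hab
      obtain ⟨t, ht⟩ : ∃ t : ℕ, (b:ℕ) = (a:ℕ) + t := ⟨(b:ℕ) - (a:ℕ), by omega⟩
      have hc := hchain j t a b ht
      have hη : eta0 n a - eta0 n b = (t:ℤ) := by
        simp only [eta0]; omega
      have htn : (t:ℤ) ≤ (n:ℤ) - 1 := by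
        have := b.isLt; omega
      have hGeq : (lam j a + eta0 n a - (p:ℤ) * eta0 n a)
          - (lam j b + eta0 n b - (p:ℤ) * eta0 n b)
          = prZ lam j a b - (p:ℤ) * (eta0 n a - eta0 n b) := by
        simp only [prZ]; ring
      rw [abs_le]
      have ht0 : (0:ℤ) ≤ (t:ℤ) := Int.natCast_nonneg t
      constructor
      · rw [hGeq, hη]
        nlinarith [hc.2, mul_nonneg (by linarith : (0:ℤ) ≤ (n:ℤ)-1-(t:ℤ))
          (by linarith : (0:ℤ) ≤ (p:ℤ)-(d:ℤ)-1)]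
      · rw [hGeq, hη]
        nlinarith [hc.1, mul_nonneg (by linarith : (0:ℤ) ≤ (n:ℤ)-1)
          (by linarith : (0:ℤ) ≤ (p:ℤ)-(d:ℤ)-1)]
    intro j a b
    rcases le_total (a:ℕ) (b:ℕ) with h | h
    · exact main j a b h
    · rw [abs_sub_comm]; exact main j b a h
  -- bound |prZ μ'| ≤ p - 1
  have hμbound : ∀ (j : Fin f) (i k : Fin n), |prZ μ' j i k| ≤ (p:ℤ) - 1 := by
    have half : ∀ (j : Fin f) (i k : Fin n), i < k →
        |prZ μ' j i k| ≤ (p:ℤ) - 1 := by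
      intro j i k h
      have := hμ' j i k h
      rw [abs_le]
      constructor
      · push_cast at this; linarith [this.1]
      · have := Int.add_one_le_iff.mpr this.2; push_cast at this ⊢; linarith
    intro j i k
    rcases lt_trichotomy i k with h | h | h
    · exact half j i k h
    · subst h; simp [prZ]; linarith
    · have hsym : prZ μ' j i k = -prZ μ' j k i := by simp only [prZ]; ring
      rw [hsym, abs_neg]; exact half j k i h
  -- global spread bound on ν
  have hne : Nonempty (Fin f × Fin n × Fin n) :=
    ⟨⟨⟨0, hf⟩, ⟨0, by omega⟩, ⟨0, by omega⟩⟩⟩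
  obtain ⟨q0, hmax⟩ := Finite.exists_max
    (fun q : Fin f × Fin n × Fin n => |ν q.1 q.2.1 - ν q.1 q.2.2|)
  set T : ℤ := |ν q0.1 q0.2.1 - ν q0.1 q0.2.2| with hTdef
  have hT : ∀ (j : Fin f) (a b : Fin n), |ν j a - ν j b| ≤ T := by
    intro j a b; exact hmax ⟨j, a, b⟩
  have hT0 : (0:ℤ) ≤ T := abs_nonneg _
  -- key difference identity
  have keydiff : ∀ (j : Fin f) (i k : Fin n),
      prZ μ' j i k =
        ((lam j (Fin.rev ((σ j)⁻¹ i)) + eta0 n (Fin.rev ((σ j)⁻¹ i))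
            - (p:ℤ) * eta0 n (Fin.rev ((σ j)⁻¹ i)))
          - (lam j (Fin.rev ((σ j)⁻¹ k)) + eta0 n (Fin.rev ((σ j)⁻¹ k))
            - (p:ℤ) * eta0 n (Fin.rev ((σ j)⁻¹ k))))
        + (p:ℤ) * (ν j i - ν j k)
        - (ν ((finRotate f)⁻¹ j) ((conjW σ s j)⁻¹ i)
            - ν ((finRotate f)⁻¹ j) ((conjW σ s j)⁻¹ k)) := by
    intro j i k
    have h1 := key j i
    have h2 := key j k
    simp only [prZ]
    linarith [h1, h2]
  have hTn : T ≤ (n:ℤ) - 1 := by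
    obtain ⟨j0, a0, b0⟩ := q0
    have hk := keydiff j0 a0 b0
    have h1 := hμbound j0 a0 b0
    have h2 := hGbound j0 (Fin.rev ((σ j0)⁻¹ a0)) (Fin.rev ((σ j0)⁻¹ b0))
    have h3 := hT ((finRotate f)⁻¹ j0) ((conjW σ s j0)⁻¹ a0) ((conjW σ s j0)⁻¹ b0)
    have habs : (p:ℤ) * T ≤ ((p:ℤ) - 1) + ((n:ℤ)-1)*((p:ℤ)-(d:ℤ)-1) + T := by
      have e1 : (p:ℤ) * T = |(p:ℤ) * (ν j0 a0 - ν j0 b0)| := by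
        rw [abs_mul, abs_of_nonneg (le_of_lt hp0)]
      have e2 : (p:ℤ) * (ν j0 a0 - ν j0 b0) =
          prZ μ' j0 a0 b0
          + (-(((lam j0 (Fin.rev ((σ j0)⁻¹ a0)) + eta0 n (Fin.rev ((σ j0)⁻¹ a0))
              - (p:ℤ) * eta0 n (Fin.rev ((σ j0)⁻¹ a0)))
            - (lam j0 (Fin.rev ((σ j0)⁻¹ b0)) + eta0 n (Fin.rev ((σ j0)⁻¹ b0))
              - (p:ℤ) * eta0 n (Fin.rev ((σ j0)⁻¹ b0))))))
          + (ν ((finRotate f)⁻¹ j0) ((conjW σ s j0)⁻¹ a0)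
              - ν ((finRotate f)⁻¹ j0) ((conjW σ s j0)⁻¹ b0)) := by
        linarith [hk]
      calc (p:ℤ) * T = |(p:ℤ) * (ν j0 a0 - ν j0 b0)| := e1
        _ ≤ _ := by
            rw [e2]
            refine le_trans (abs_add_three _ _ _) ?_
            rw [abs_neg]
            exact add_le_add (add_le_add h1 h2) h3
    nlinarith [habs, mul_le_mul_of_nonneg_left (le_refl T) (le_of_lt hp0)]
  -- finish
  intro j i k hik
  set a := Fin.rev ((σ j)⁻¹ i) with hadef
  set b := Fin.rev ((σ j)⁻¹ k) with hbdef
  have hab : a ≠ b := by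
    intro h
    have h1 : (σ j)⁻¹ i = (σ j)⁻¹ k := Fin.rev_injective h
    have h2 : i = k := (Equiv.injective _) h1
    exact (ne_of_lt hik) h2
  obtain ⟨M, hM1, hM2⟩ : ∃ M : ℤ,
      (d:ℤ) < prZ lam j a b - (p:ℤ)*M ∧ prZ lam j a b - (p:ℤ)*M < (p:ℤ) - d := by
    rcases lt_trichotomy a b with h | h | h
    · obtain ⟨N, h1, h2⟩ := hdeep j a b h
      refine ⟨N, by linarith, ?_⟩
      have : (p:ℤ)*(N+1) = (p:ℤ)*N + p := by ring
      linarith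
    · exact absurd h hab
    · obtain ⟨N, h1, h2⟩ := hdeep j b a h
      have hsym : prZ lam j a b = -prZ lam j b a := by simp only [prZ]; ring
      refine ⟨-(N+1), ?_, ?_⟩
      · have e : (p:ℤ)*(-(N+1)) = -((p:ℤ)*N) - p := by ring
        have e2 : (p:ℤ)*(N+1) = (p:ℤ)*N + p := by ring
        rw [hsym, e]; linarith
      · have e : (p:ℤ)*(-(N+1)) = -((p:ℤ)*N) - p := by ring
        rw [hsym, e]; linarith
  have hk := keydiff j i k
  have hD := hT ((finRotate f)⁻¹ j) ((conjW σ s j)⁻¹ i) ((conjW σ s j)⁻¹ k)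
  set D := ν ((finRotate f)⁻¹ j) ((conjW σ s j)⁻¹ i)
      - ν ((finRotate f)⁻¹ j) ((conjW σ s j)⁻¹ k) with hDdef
  have hDb : |D| ≤ (n:ℤ) - 1 := le_trans hD hTn
  obtain ⟨hDb1, hDb2⟩ := abs_le.mp hDb
  have hGeq : (lam j a + eta0 n a - (p:ℤ)*eta0 n a) - (lam j b + eta0 n b - (p:ℤ)*eta0 n b)
      = prZ lam j a b - (p:ℤ)*(eta0 n a - eta0 n b) := by
    simp only [prZ]; ring
  set r := prZ lam j a b - (p:ℤ)*M with hrdef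
  set E := M + ((ν j i - ν j k) - (eta0 n a - eta0 n b)) with hEdef
  have hWeq : prZ μ' j i k = r - D + (p:ℤ)*E := by
    have hx : (p:ℤ)*E = (p:ℤ)*M + ((p:ℤ)*(ν j i - ν j k) - (p:ℤ)*(eta0 n a - eta0 n b)) := by
      rw [hEdef]; ring
    linarith [hk, hGeq, hx]
  have hprm := hμ' j i k hik
  have hprm1 : (0:ℤ) < prZ μ' j i k := by
    have := hprm.1; push_cast at this; linarith
  have hprm2 : prZ μ' j i k < (p:ℤ) := by
    have := hprm.2; push_cast at this; linarith
  have hE0 : E = 0 := by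
    rcases lt_trichotomy E 0 with h | h | h
    · exfalso
      have h1 : E ≤ -1 := by omega
      have h2 : (p:ℤ)*E ≤ -(p:ℤ) := by nlinarith
      linarith [hWeq, hprm1]
    · exact h
    · exfalso
      have h1 : 1 ≤ E := h
      have h2 : (p:ℤ) ≤ (p:ℤ)*E := by nlinarith
      linarith [hWeq, hprm2]
  rw [hE0, mul_zero, add_zero] at hWeq
  have hcast : ((d - n + 1 : ℕ) : ℤ) = (d:ℤ) - (n:ℤ) + 1 := by omega
  rw [hcast]
  constructor
  · rw [hWeq]; linarith
  · rw [hWeq]; linarith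

end LLLSerre
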